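/- Let y ∈ ℕⁿ be counts, X ∈ ℝ^{n×q} a nonnegative matrix, c > 0, α_c = max(1,c). The function β ↦ Σᵢ [yᵢ·log(exp(xᵢᵀβ/α_c) − 1) − c·exp(xᵢᵀβ/α_c)] is concave on the set of β ∈ ℝ^q with β ≥ 0 componentwise and xᵢᵀβ > 0 for all i. -/

import Mathlib

open Real

/-- `t ↦ log (exp t - 1)` is concave on `(0, ∞)`. -/
lemma concaveOn_log_exp_sub_one :
    ConcaveOn ℝ (Set.Ioi (0:ℝ)) (fun t => Real.log (Real.exp t - 1)) := by
  have hderiv : ∀ t ∈ Set.Ioi (0:ℝ),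
      deriv (fun t => Real.log (Real.exp t - 1)) t = Real.exp t / (Real.exp t - 1) := by
    intro t ht
    have h1 : (1:ℝ) < Real.exp t := by
      rw [← Real.exp_zero]; exact Real.exp_lt_exp.2 ht
    have h : HasDerivAt (fun t => Real.log (Real.exp t - 1)) (Real.exp t / (Real.exp t - 1)) t :=
      ((Real.hasDerivAt_exp t).sub_const 1).log (by linarith)
    exact h.deriv
  have hanti : StrictAntiOn (deriv (fun t => Real.log (Real.exp t - 1))) (Set.Ioi (0:ℝ)) := by
    intro a ha b hb hab
    rw [hderiv a ha, hderiv b hb]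
    have h1a : (1:ℝ) < Real.exp a := by rw [← Real.exp_zero]; exact Real.exp_lt_exp.2 ha
    have h1b : (1:ℝ) < Real.exp b := by rw [← Real.exp_zero]; exact Real.exp_lt_exp.2 hb
    have hab' : Real.exp a < Real.exp b := Real.exp_lt_exp.2 hab
    rw [div_lt_div_iff₀ (by linarith) (by linarith)]
    nlinarith
  have hcont : ContinuousOn (fun t => Real.log (Real.exp t - 1)) (Set.Ioi (0:ℝ)) := by
    intro t ht
    have h1 : (1:ℝ) < Real.exp t := by rw [← Real.exp_zero]; exact Real.exp_lt_exp.2 ht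
    exact (Real.continuousAt_log (by show Real.exp t - 1 ≠ 0; linarith) |>.comp
      ((Real.continuous_exp.sub continuous_const).continuousAt)).continuousWithinAt
  have := StrictAntiOn.strictConcaveOn_of_deriv (convex_Ioi 0) hcont
    (by rwa [interior_Ioi])
  exact this.concaveOn

/-- Concavity of the Poisson regression log-likelihood with shifted-log link and
nonnegativity-constrained coefficients. -/
theorem stmt_4 (n q : ℕ) (y : Fin n → ℕ) (X : Fin n → Fin q → ℝ)
    (hX : ∀ i j, 0 ≤ X i j) (c : ℝ) (hc : 0 < c) :
    ConcaveOn ℝ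
      {β : Fin q → ℝ | (∀ j, 0 ≤ β j) ∧ ∀ i, 0 < ∑ j, X i j * β j}
      (fun β : Fin q → ℝ =>
        ∑ i, ((y i : ℝ) * Real.log (Real.exp ((∑ j, X i j * β j) / max 1 c) - 1)
          - c * Real.exp ((∑ j, X i j * β j) / max 1 c))) := by
  set α : ℝ := max 1 c with hα
  have hα0 : 0 < α := lt_max_of_lt_left one_pos
  set S : Set (Fin q → ℝ) :=
    {β : Fin q → ℝ | (∀ j, 0 ≤ β j) ∧ ∀ i, 0 < ∑ j, X i j * β j} with hS
  -- affine maps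
  have hSconv : Convex ℝ S := by
    intro x hx z hz a b ha hb hab
    constructor
    · intro j
      simp only [Pi.add_apply, Pi.smul_apply, smul_eq_mul]
      have := hx.1 j; have := hz.1 j
      positivity
    · intro i
      have hx' := hx.2 i; have hz' := hz.2 i
      have hxsum : ∑ j, X i j * (a • x + b • z) j = a * (∑ j, X i j * x j) + b * (∑ j, X i j * z j) := by
        simp only [Pi.add_apply, Pi.smul_apply, smul_eq_mul, mul_add]
        rw [Finset.sum_add_distrib, Finset.mul_sum, Finset.mul_sum]
        congr 1 <;> exact Finset.sum_congr rfl fun j _ => by ring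
      rw [hxsum]
      rcases eq_or_lt_of_le ha with ha' | ha'
      · have hb1 : b = 1 := by linarith
        simpa [← ha', hb1] using hz'
      · have : 0 ≤ b * (∑ j, X i j * z j) := mul_nonneg hb hz'.le
        nlinarith
  -- each summand is concave on S
  have hterm : ∀ i : Fin n, ConcaveOn ℝ S
      (fun β : Fin q → ℝ => (y i : ℝ) * Real.log (Real.exp ((∑ j, X i j * β j) / α) - 1)
        - c * Real.exp ((∑ j, X i j * β j) / α)) := by
    intro i
    -- the affine (linear) map β ↦ (∑ j, X i j * β j) / α
    let L : (Fin q → ℝ) →ₗ[ℝ] ℝ :=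
      { toFun := fun β => (∑ j, X i j * β j) / α
        map_add' := by
          intro u v
          simp only [Pi.add_apply, mul_add]
          rw [Finset.sum_add_distrib, add_div]
        map_smul' := by
          intro m u
          simp only [Pi.smul_apply, smul_eq_mul, RingHom.id_apply]
          have h : ∑ x, X i x * (m * u x) = m * ∑ j, X i j * u j := by
            rw [Finset.mul_sum]; exact Finset.sum_congr rfl fun j _ => by ring
          rw [h, mul_div_assoc] }
    have hL : ∀ β, L β = (∑ j, X i j * β j) / α := fun _ => rfl
    have hpre : S ⊆ L ⁻¹' (Set.Ioi (0:ℝ)) := by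
      intro β hβ
      simp only [Set.mem_preimage, Set.mem_Ioi, hL]
      exact div_pos (hβ.2 i) hα0
    -- concavity of first part
    have h1 : ConcaveOn ℝ S
        (fun β : Fin q → ℝ => (y i : ℝ) * Real.log (Real.exp ((∑ j, X i j * β j) / α) - 1)) := by
      have := (concaveOn_log_exp_sub_one.comp_affineMap L.toAffineMap).subset hpre hSconv
      have h2 := this.smul (c := (y i : ℝ)) (Nat.cast_nonneg _)
      simpa [Function.comp, smul_eq_mul, hL] using h2
    -- convexity of second part
    have h2 : ConvexOn ℝ S
        (fun β : Fin q → ℝ => c * Real.exp ((∑ j, X i j * β j) / α)) := by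
      have := ((convexOn_exp.comp_affineMap L.toAffineMap).subset
        (Set.subset_preimage_univ) hSconv).smul hc.le
      simpa [Function.comp, smul_eq_mul, hL] using this
    simpa [sub_eq_add_neg, Pi.add_def, Pi.neg_def] using h1.sub h2
  -- sum of concave functions
  have : ConcaveOn ℝ S (fun β => ∑ i, ((y i : ℝ) * Real.log (Real.exp ((∑ j, X i j * β j) / α) - 1)
      - c * Real.exp ((∑ j, X i j * β j) / α))) := by
    classical
    induction (Finset.univ : Finset (Fin n)) using Finset.induction with
    | empty => simpa using concaveOn_const (0:ℝ) hSconv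
    | insert _ _ hnot ih =>
        simp only [Finset.sum_insert hnot]
        exact (hterm _).add ih
  exact this
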